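/- Completeness of the translation t for K4: let Q = {q_n} be fresh atoms and define t: L∞ → modal language by commuting with atoms and booleans and (□n A)^t = □(⋀_{i=0}^{n} q_i → A^t). If Γ^t ⊢_{K4(Q)} A^t in ordinary unimodal K4 (over atoms including Q), then Γ ⊢_{K4_h} A. -/

import Mathlib

/-- Poly-modal formulas with modalities `□n` for `n : ℕ`. -/
inductive Fm : Type
  | atom : ℕ → Fm
  | bot  : Fm
  | and  : Fm → Fm → Fm
  | or   : Fm → Fm → Fm
  | imp  : Fm → Fm → Fm
  | neg  : Fm → Fm
  | box  : ℕ → Fm → Fm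
  deriving DecidableEq

def Fm.top : Fm := Fm.neg Fm.bot

/-- `i` occurs as a modality index in the formula. -/
def occursBox (i : ℕ) : Fm → Prop
  | .atom _ => False
  | .bot => False
  | .and A B => occursBox i A ∨ occursBox i B
  | .or A B => occursBox i A ∨ occursBox i B
  | .imp A B => occursBox i A ∨ occursBox i B
  | .neg A => occursBox i A
  | .box n A => i = n ∨ occursBox i A

/-- `n` is strictly greater than every modality index occurring in `A`
    (the paper's "`n > r(A)`"). -/
def BoxLt (A : Fm) (n : ℕ) : Prop := ∀ i, occursBox i A → i < n

/-- The language `L∞`: each box index strictly exceeds all box indices in its scope. -/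
inductive Linf : Fm → Prop
  | atom (k : ℕ) : Linf (.atom k)
  | bot : Linf .bot
  | and {A B : Fm} : Linf A → Linf B → Linf (.and A B)
  | or {A B : Fm} : Linf A → Linf B → Linf (.or A B)
  | imp {A B : Fm} : Linf A → Linf B → Linf (.imp A B)
  | neg {A : Fm} : Linf A → Linf (.neg A)
  | box {A : Fm} (n : ℕ) : Linf A → BoxLt A n → Linf (.box n A)

/-- Boolean evaluation treating atoms and boxed formulas as propositional atoms. -/
def evalWith (v : Fm → Bool) : Fm → Bool
  | .atom k => v (.atom k)
  | .bot => false
  | .and A B => evalWith v A && evalWith v B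
  | .or A B => evalWith v A || evalWith v B
  | .imp A B => !(evalWith v A) || evalWith v B
  | .neg A => !(evalWith v A)
  | .box n A => v (.box n A)

/-- Classical propositional tautologies (on `L∞`-formulas as atoms). -/
def Taut (A : Fm) : Prop := ∀ v, evalWith v A = true

def axH (F : Fm) : Prop := ∃ A n, Linf (Fm.box n A) ∧ F = (Fm.box n A).imp (Fm.box (n+1) A)
def axK (F : Fm) : Prop := ∃ A B n, Linf (Fm.box n (A.imp B)) ∧
    F = (Fm.box n (A.imp B)).imp ((Fm.box n A).imp (Fm.box n B))
def axFour (F : Fm) : Prop := ∃ A n, Linf (Fm.box n A) ∧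
    F = (Fm.box n A).imp (Fm.box (n+1) (Fm.box n A))
def axD (F : Fm) : Prop := ∃ n, F = Fm.neg (Fm.box n Fm.bot)
def axT (F : Fm) : Prop := ∃ A n, Linf (Fm.box n A) ∧ F = (Fm.box n A).imp A
def axL (F : Fm) : Prop := ∃ A n, Linf (Fm.box n A) ∧
    F = (Fm.box (n+1) ((Fm.box n A).imp A)).imp (Fm.box n A)
def axFive (F : Fm) : Prop := ∃ A n, Linf (Fm.box n A) ∧
    F = ((Fm.box n A).neg).imp (Fm.box (n+1) ((Fm.box n A).neg))

/-- Hilbert-style provability over `L∞` from a set of axiom (schema instances):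
    classical tautologies, modus ponens, and necessitation restricted to `n > r(A)`. -/
inductive Prv (Ax : Fm → Prop) : Fm → Prop
  | ax {A : Fm} : Ax A → Prv Ax A
  | taut {A : Fm} : Linf A → Taut A → Prv Ax A
  | mp {A B : Fm} : Prv Ax (A.imp B) → Prv Ax A → Prv Ax B
  | nec {A : Fm} (n : ℕ) : Prv Ax A → BoxLt A n → Prv Ax (Fm.box n A)

def K4hAx (F : Fm) : Prop := axH F ∨ axK F ∨ axFour F
def KD4hAx (F : Fm) : Prop := K4hAx F ∨ axD F
def S4hAx (F : Fm) : Prop := K4hAx F ∨ axT F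
def GLhAx (F : Fm) : Prop := K4hAx F ∨ axL F
def KD45hAx (F : Fm) : Prop := KD4hAx F ∨ axFive F

def K4h : Fm → Prop := Prv K4hAx
def KD4h : Fm → Prop := Prv KD4hAx
def S4h : Fm → Prop := Prv S4hAx
def GLh : Fm → Prop := Prv GLhAx

def conjList (l : List Fm) : Fm := l.foldr Fm.and Fm.top
def disjList (l : List Fm) : Fm := l.foldr Fm.or Fm.bot

/-- `Γ ⊢_L A` : some finite conjunction of members of `Γ` implies `A` in `L`. -/
def Deriv (Ax : Fm → Prop) (Γ : Set Fm) (A : Fm) : Prop :=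
  ∃ l : List Fm, (∀ B ∈ l, B ∈ Γ) ∧ Prv Ax ((conjList l).imp A)

/-- Ordinary unimodal formulas over the original atoms together with
    fresh atoms `q n`. -/
inductive MFm : Type
  | atom : ℕ → MFm
  | q : ℕ → MFm
  | bot : MFm
  | and : MFm → MFm → MFm
  | or : MFm → MFm → MFm
  | imp : MFm → MFm → MFm
  | neg : MFm → MFm
  | box : MFm → MFm
  deriving DecidableEq

def mevalWith (v : MFm → Bool) : MFm → Bool
  | .atom k => v (.atom k)
  | .q k => v (.q k)
  | .bot => false
  | .and A B => mevalWith v A && mevalWith v B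
  | .or A B => mevalWith v A || mevalWith v B
  | .imp A B => !(mevalWith v A) || mevalWith v B
  | .neg A => !(mevalWith v A)
  | .box A => v (.box A)

def MTaut (A : MFm) : Prop := ∀ v, mevalWith v A = true

/-- Ordinary unimodal `K4` over the language including the atoms `q`. -/
inductive K4Q : MFm → Prop
  | taut {A} : MTaut A → K4Q A
  | axK (A B : MFm) : K4Q ((MFm.box (A.imp B)).imp ((MFm.box A).imp (MFm.box B)))
  | axFour (A : MFm) : K4Q ((MFm.box A).imp (MFm.box (MFm.box A)))
  | mp {A B} : K4Q (A.imp B) → K4Q A → K4Q B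
  | nec {A} : K4Q A → K4Q (MFm.box A)

/-- Ordinary unimodal `S4` over the language including the atoms `q`. -/
inductive S4Q : MFm → Prop
  | taut {A} : MTaut A → S4Q A
  | axK (A B : MFm) : S4Q ((MFm.box (A.imp B)).imp ((MFm.box A).imp (MFm.box B)))
  | axFour (A : MFm) : S4Q ((MFm.box A).imp (MFm.box (MFm.box A)))
  | axT (A : MFm) : S4Q ((MFm.box A).imp A)
  | mp {A B} : S4Q (A.imp B) → S4Q A → S4Q B
  | nec {A} : S4Q A → S4Q (MFm.box A)

/-- `q_0 ∧ ⋯ ∧ q_n`. -/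
def qconj : ℕ → MFm
  | 0 => MFm.q 0
  | n+1 => (qconj n).and (MFm.q (n+1))

/-- The translation `t`: `(□n A)^t = □(q_0 ∧ ⋯ ∧ q_n → A^t)`. -/
def trT : Fm → MFm
  | .atom k => .atom k
  | .bot => .bot
  | .and A B => (trT A).and (trT B)
  | .or A B => (trT A).or (trT B)
  | .imp A B => (trT A).imp (trT B)
  | .neg A => (trT A).neg
  | .box n A => MFm.box ((qconj n).imp (trT A))

def conjM (l : List MFm) : MFm := l.foldr MFm.and (MFm.neg MFm.bot)

/-- `Γ ⊢_L A` for a unimodal system `L`. -/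
def DerivM (P : MFm → Prop) (Γ : Set MFm) (A : MFm) : Prop :=
  ∃ l : List MFm, (∀ B ∈ l, B ∈ Γ) ∧ P ((conjM l).imp A)

/-! ### Auxiliary development -/

section Aux

attribute [local instance] Classical.propDecidable

/-! #### Basic Linf / BoxLt facts -/

lemma linf_top : Linf Fm.top := Linf.neg Linf.bot

lemma boxLt_mono {A : Fm} {m n : ℕ} (h : BoxLt A m) (hmn : m ≤ n) : BoxLt A n :=
  fun i hi => lt_of_lt_of_le (h i hi) hmn

lemma boxLt_top (n : ℕ) : BoxLt Fm.top n := fun i hi => (hi : False).elim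

lemma boxLt_imp {A B : Fm} {n : ℕ} (hA : BoxLt A n) (hB : BoxLt B n) :
    BoxLt (A.imp B) n := fun i hi => hi.elim (hA i) (hB i)

lemma boxLt_and {A B : Fm} {n : ℕ} (hA : BoxLt A n) (hB : BoxLt B n) :
    BoxLt (A.and B) n := fun i hi => hi.elim (hA i) (hB i)

lemma boxLt_of_linf_box {n : ℕ} {A : Fm} (h : Linf (Fm.box n A)) : BoxLt A n := by
  cases h; assumption

lemma linf_of_linf_box {n : ℕ} {A : Fm} (h : Linf (Fm.box n A)) : Linf A := by
  cases h; assumption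

lemma linf_conjList {l : List Fm} (h : ∀ B ∈ l, Linf B) : Linf (conjList l) := by
  induction l with
  | nil => exact linf_top
  | cons a t ih =>
    exact Linf.and (h a (by simp)) (ih fun B hB => h B (by simp [hB]))

lemma boxLt_conjList {l : List Fm} {n : ℕ} (h : ∀ B ∈ l, BoxLt B n) :
    BoxLt (conjList l) n := by
  induction l with
  | nil => exact boxLt_top n
  | cons a t ih =>
    exact boxLt_and (h a (by simp)) (ih fun B hB => h B (by simp [hB]))

/-! #### Evaluation of conjunctions -/

lemma eval_conjList (v : Fm → Bool) (l : List Fm) :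
    evalWith v (conjList l) = l.all (fun C => evalWith v C) := by
  induction l with
  | nil => simp [conjList, Fm.top, evalWith]
  | cons a t ih => simp [conjList, evalWith] at *; rw [ih]

/-! #### Propositional reasoning in `Prv K4hAx` -/

lemma prv_taut2 {P Q : Fm} (hP : Linf P) (hQ : Linf Q)
    (h : ∀ v, evalWith v P = true → evalWith v Q = true) :
    Prv K4hAx (P.imp Q) := by
  refine Prv.taut (Linf.imp hP hQ) ?_
  intro v
  have := h v
  simp only [evalWith]
  cases hv : evalWith v P with
  | false => rfl
  | true => simp [this hv]

lemma prv_imp_trans {A B C : Fm} (hA : Linf A) (hB : Linf B) (hC : Linf C)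
    (h1 : Prv K4hAx (A.imp B)) (h2 : Prv K4hAx (B.imp C)) :
    Prv K4hAx (A.imp C) := by
  have t : Prv K4hAx ((A.imp B).imp ((B.imp C).imp (A.imp C))) := by
    refine Prv.taut (Linf.imp (Linf.imp hA hB) (Linf.imp (Linf.imp hB hC) (Linf.imp hA hC))) ?_
    intro v; simp only [evalWith]
    cases evalWith v A <;> cases evalWith v B <;> cases evalWith v C <;> rfl
  exact (t.mp h1).mp h2

lemma prv_H {n : ℕ} {A : Fm} (h : Linf (Fm.box n A)) :
    Prv K4hAx ((Fm.box n A).imp (Fm.box (n+1) A)) :=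
  Prv.ax (Or.inl ⟨A, n, h, rfl⟩)

lemma prv_K {n : ℕ} {A B : Fm} (h : Linf (Fm.box n (A.imp B))) :
    Prv K4hAx ((Fm.box n (A.imp B)).imp ((Fm.box n A).imp (Fm.box n B))) :=
  Prv.ax (Or.inr (Or.inl ⟨A, B, n, h, rfl⟩))

lemma prv_four {n : ℕ} {A : Fm} (h : Linf (Fm.box n A)) :
    Prv K4hAx ((Fm.box n A).imp (Fm.box (n+1) (Fm.box n A))) :=
  Prv.ax (Or.inr (Or.inr ⟨A, n, h, rfl⟩))

lemma prv_idx_mono {m n : ℕ} {A : Fm} (hmn : m ≤ n) (hA : Linf A) (hlt : BoxLt A m) :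
    Prv K4hAx ((Fm.box m A).imp (Fm.box n A)) := by
  induction n with
  | zero =>
    have hm : m = 0 := Nat.le_zero.mp hmn
    subst hm
    refine prv_taut2 (Linf.box 0 hA hlt) (Linf.box 0 hA hlt) (fun v h => h)
  | succ n ih =>
    rcases Nat.lt_or_ge m (n+1) with h | h
    · have hmn' : m ≤ n := Nat.lt_succ_iff.mp h
      have h1 := ih hmn'
      have h2 : Prv K4hAx ((Fm.box n A).imp (Fm.box (n+1) A)) :=
        prv_H (Linf.box n hA (boxLt_mono hlt hmn'))
      exact prv_imp_trans (Linf.box m hA hlt) (Linf.box n hA (boxLt_mono hlt hmn'))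
        (Linf.box (n+1) hA (boxLt_mono hlt (Nat.le_succ_of_le hmn'))) h1 h2
    · have : m = n+1 := le_antisymm hmn h
      subst this
      exact prv_taut2 (Linf.box (n+1) hA hlt) (Linf.box (n+1) hA hlt) (fun v h => h)

lemma prv_box_and {n : ℕ} {A B : Fm} (hA : Linf A) (hB : Linf B)
    (hlA : BoxLt A n) (hlB : BoxLt B n) :
    Prv K4hAx ((Fm.box n A).imp ((Fm.box n B).imp (Fm.box n (A.and B)))) := by
  have t : Prv K4hAx (A.imp (B.imp (A.and B))) := by
    refine Prv.taut (Linf.imp hA (Linf.imp hB (Linf.and hA hB))) ?_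
    intro v; simp only [evalWith]
    cases evalWith v A <;> cases evalWith v B <;> rfl
  have hlI : BoxLt (B.imp (A.and B)) n := boxLt_imp hlB (boxLt_and hlA hlB)
  have hn : Prv K4hAx (Fm.box n (A.imp (B.imp (A.and B)))) :=
    Prv.nec n t (boxLt_imp hlA hlI)
  have hK1 := prv_K (A := A) (B := B.imp (A.and B)) (n := n)
    (Linf.box n (Linf.imp hA (Linf.imp hB (Linf.and hA hB))) (boxLt_imp hlA hlI))
  have h1 : Prv K4hAx ((Fm.box n A).imp (Fm.box n (B.imp (A.and B)))) := hK1.mp hn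
  have hK2 := prv_K (A := B) (B := A.and B) (n := n)
    (Linf.box n (Linf.imp hB (Linf.and hA hB)) hlI)
  exact prv_imp_trans (Linf.box n hA hlA)
    (Linf.box n (Linf.imp hB (Linf.and hA hB)) hlI)
    (Linf.imp (Linf.box n hB hlB) (Linf.box n (Linf.and hA hB) (boxLt_and hlA hlB)))
    h1 hK2

end Aux
section Aux2

attribute [local instance] Classical.propDecidable

def ConsK (X : Set Fm) : Prop := ¬ Deriv K4hAx X Fm.bot

def IsMCS (X : Set Fm) : Prop :=
  (∀ A ∈ X, Linf A) ∧ ConsK X ∧ ∀ A, Linf A → A ∉ X → ¬ ConsK (insert A X)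

/-- Core list-tautology: discharging a hypothesis. If `conj l → ⊥` then
    `conj (l.filter (· ≠ C)) → ¬C`-style facts, in a general form. -/
lemma all_filter_imp {v : Fm → Bool} {l : List Fm} {C : Fm}
    (hf : (l.filter (fun B => B ≠ C)).all (fun B => evalWith v B) = true)
    (hC : evalWith v C = true) : l.all (fun B => evalWith v B) = true := by
  rw [List.all_eq_true] at *
  intro B hB
  by_cases hBC : B = C
  · subst hBC; exact hC
  · exact hf B (List.mem_filter.mpr ⟨hB, by simp [hBC]⟩)

/-- Deduction step: from `Deriv (insert A X) ⊥` get a list in `X` whose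
    conjunction provably implies `A.neg`. -/
lemma deduction_neg {X : Set Fm} {A : Fm} (hX : ∀ B ∈ X, Linf B) (hA : Linf A)
    (h : Deriv K4hAx (insert A X) Fm.bot) : Deriv K4hAx X A.neg := by
  obtain ⟨l, hl, hp⟩ := h
  refine ⟨l.filter (fun B => B ≠ A), ?_, ?_⟩
  · intro B hB
    have := List.mem_filter.mp hB
    rcases hl B this.1 with h1 | h1
    · exact absurd h1 (by simpa using this.2)
    · exact h1
  · have hlinf : ∀ B ∈ l, Linf B := by
      intro B hB
      rcases hl B hB with h1 | h1
      · subst h1; exact hA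
      · exact hX B h1
    have hl2 : ∀ B ∈ l.filter (fun B => B ≠ A), Linf B :=
      fun B hB => hlinf B (List.mem_filter.mp hB).1
    have t : Prv K4hAx (((conjList l).imp Fm.bot).imp
        ((conjList (l.filter (fun B => B ≠ A))).imp A.neg)) := by
      refine prv_taut2 (Linf.imp (linf_conjList hlinf) Linf.bot)
        (Linf.imp (linf_conjList hl2) (Linf.neg hA)) ?_
      intro v hv
      simp only [evalWith, eval_conjList] at *
      cases hAv : evalWith v A with
      | false => simp [hAv]
      | true =>
        cases hf : (l.filter (fun B => B ≠ A)).all (fun B => evalWith v B) with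
        | false => simp [hf]
        | true =>
          have := all_filter_imp hf hAv
          rw [this] at hv
          exact absurd hv (by simp)
    exact t.mp hp

/-- Cut: from `Deriv X A` and `Deriv (insert A X) B`, get `Deriv X B`. -/
lemma deriv_cut {X : Set Fm} {A B : Fm} (hX : ∀ C ∈ X, Linf C) (hA : Linf A) (hB : Linf B)
    (h1 : Deriv K4hAx X A) (h2 : Deriv K4hAx (insert A X) B) : Deriv K4hAx X B := by
  obtain ⟨l1, hl1, hp1⟩ := h1
  obtain ⟨l2, hl2, hp2⟩ := h2
  refine ⟨l1 ++ l2.filter (fun C => C ≠ A), ?_, ?_⟩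
  · intro C hC
    rcases List.mem_append.mp hC with h | h
    · exact hl1 C h
    · have := List.mem_filter.mp h
      rcases hl2 C this.1 with h1 | h1
      · exact absurd h1 (by simpa using this.2)
      · exact h1
  · have hlinf1 : ∀ C ∈ l1, Linf C := fun C hC => hX C (hl1 C hC)
    have hlinf2 : ∀ C ∈ l2, Linf C := by
      intro C hC
      rcases hl2 C hC with h | h
      · subst h; exact hA
      · exact hX C h
    have hlinf2f : ∀ C ∈ l2.filter (fun C => C ≠ A), Linf C :=
      fun C hC => hlinf2 C (List.mem_filter.mp hC).1
    have hlapp : ∀ C ∈ l1 ++ l2.filter (fun C => C ≠ A), Linf C := by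
      intro C hC
      rcases List.mem_append.mp hC with h | h
      · exact hlinf1 C h
      · exact hlinf2f C h
    have t : Prv K4hAx (((conjList l1).imp A).imp
        (((conjList l2).imp B).imp
          ((conjList (l1 ++ l2.filter (fun C => C ≠ A))).imp B))) := by
      refine prv_taut2 (Linf.imp (linf_conjList hlinf1) hA)
        (Linf.imp (Linf.imp (linf_conjList hlinf2) hB)
          (Linf.imp (linf_conjList hlapp) hB)) ?_
      intro v hv
      simp only [evalWith, eval_conjList] at *
      cases hall : (l1 ++ l2.filter (fun C => C ≠ A)).all (fun C => evalWith v C) with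
      | false => simp [hall]
      | true =>
        rw [List.all_append] at hall
        have hall1 := (Bool.and_eq_true _ _).mp hall
        rw [hall1.1] at hv
        simp only [Bool.not_true, Bool.false_or] at hv
        have hall2 : l2.all (fun C => evalWith v C) = true :=
          all_filter_imp hall1.2 hv
        rw [hall2]
        cases hBv : evalWith v B <;> simp [hBv]
    exact (t.mp hp1).mp hp2

lemma deriv_of_mem {X : Set Fm} {A : Fm} (hA : Linf A) (h : A ∈ X) :
    Deriv K4hAx X A := by
  refine ⟨[A], by simpa using h, ?_⟩
  refine prv_taut2 (Linf.and hA linf_top) hA ?_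
  intro v hv
  simp only [conjList, List.foldr, evalWith] at hv ⊢
  exact ((Bool.and_eq_true _ _).mp hv).1

lemma deriv_of_prv {X : Set Fm} {A : Fm} (hA : Linf A) (h : Prv K4hAx A) :
    Deriv K4hAx X A := by
  refine ⟨[], by simp, ?_⟩
  have t : Prv K4hAx (A.imp ((conjList []).imp A)) := by
    refine prv_taut2 hA (Linf.imp linf_top hA) ?_
    intro v hv
    simp only [evalWith, hv]
    cases evalWith v (conjList []) <;> rfl
  exact t.mp h

lemma deriv_mp {X : Set Fm} {A B : Fm} (hX : ∀ C ∈ X, Linf C) (hA : Linf A) (hB : Linf B)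
    (h1 : Deriv K4hAx X (A.imp B)) (h2 : Deriv K4hAx X A) : Deriv K4hAx X B := by
  obtain ⟨l1, hl1, hp1⟩ := h1
  obtain ⟨l2, hl2, hp2⟩ := h2
  refine ⟨l1 ++ l2, ?_, ?_⟩
  · intro C hC
    rcases List.mem_append.mp hC with h | h
    · exact hl1 C h
    · exact hl2 C h
  · have hlinf1 : ∀ C ∈ l1, Linf C := fun C hC => hX C (hl1 C hC)
    have hlinf2 : ∀ C ∈ l2, Linf C := fun C hC => hX C (hl2 C hC)
    have hlapp : ∀ C ∈ l1 ++ l2, Linf C := by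
      intro C hC
      rcases List.mem_append.mp hC with h | h
      · exact hlinf1 C h
      · exact hlinf2 C h
    have t : Prv K4hAx (((conjList l1).imp (A.imp B)).imp
        (((conjList l2).imp A).imp ((conjList (l1 ++ l2)).imp B))) := by
      refine prv_taut2 (Linf.imp (linf_conjList hlinf1) (Linf.imp hA hB))
        (Linf.imp (Linf.imp (linf_conjList hlinf2) hA)
          (Linf.imp (linf_conjList hlapp) hB)) ?_
      intro v hv
      simp only [evalWith, eval_conjList, List.all_append] at *
      cases h1v : l1.all (fun C => evalWith v C) <;>
        cases h2v : l2.all (fun C => evalWith v C) <;>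
          simp_all <;> cases evalWith v A <;> simp_all
    exact (t.mp hp1).mp hp2

end Aux2
section Aux3

attribute [local instance] Classical.propDecidable

lemma mcs_closed {X : Set Fm} (hX : IsMCS X) {A : Fm} (hA : Linf A)
    (h : Deriv K4hAx X A) : A ∈ X := by
  by_contra hnot
  have hbad := hX.2.2 A hA hnot
  rw [ConsK, not_not] at hbad
  exact hX.2.1 (deriv_cut hX.1 hA Linf.bot h hbad)

lemma mcs_of_prv {X : Set Fm} (hX : IsMCS X) {A : Fm} (hA : Linf A)
    (h : Prv K4hAx A) : A ∈ X :=
  mcs_closed hX hA (deriv_of_prv hA h)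

lemma mcs_mp {X : Set Fm} (hX : IsMCS X) {A B : Fm} (hB : Linf B)
    (h : Prv K4hAx (A.imp B)) (hA : A ∈ X) : B ∈ X := by
  have hALinf := hX.1 A hA
  exact mcs_closed hX hB (deriv_mp hX.1 hALinf hB (deriv_of_prv (Linf.imp hALinf hB) h)
    (deriv_of_mem hALinf hA))

lemma mcs_mp_mem {X : Set Fm} (hX : IsMCS X) {A B : Fm} (hB : Linf B)
    (h : A.imp B ∈ X) (hA : A ∈ X) : B ∈ X := by
  have hALinf := hX.1 A hA
  exact mcs_closed hX hB (deriv_mp hX.1 hALinf hB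
    (deriv_of_mem (hX.1 _ h) h) (deriv_of_mem hALinf hA))

lemma mcs_neg_of_not_mem {X : Set Fm} (hX : IsMCS X) {A : Fm} (hA : Linf A)
    (h : A ∉ X) : A.neg ∈ X := by
  have hbad := hX.2.2 A hA h
  rw [ConsK, not_not] at hbad
  exact mcs_closed hX (Linf.neg hA) (deduction_neg hX.1 hA hbad)

lemma mcs_not_mem_of_neg {X : Set Fm} (hX : IsMCS X) {A : Fm}
    (h : A.neg ∈ X) : A ∉ X := by
  intro hA
  refine hX.2.1 ?_
  have hALinf := hX.1 A hA
  refine deriv_mp hX.1 hALinf Linf.bot ?_ (deriv_of_mem hALinf hA)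
  refine deriv_mp hX.1 (Linf.neg hALinf) (Linf.imp hALinf Linf.bot) ?_
    (deriv_of_mem (Linf.neg hALinf) h)
  refine deriv_of_prv (Linf.imp (Linf.neg hALinf) (Linf.imp hALinf Linf.bot)) ?_
  refine prv_taut2 (Linf.neg hALinf) (Linf.imp hALinf Linf.bot) ?_
  intro v hv
  simp only [evalWith] at *
  cases hAv : evalWith v A
  · rfl
  · rw [hAv] at hv; exact absurd hv (by simp)

lemma mcs_neg_iff {X : Set Fm} (hX : IsMCS X) {A : Fm} (hA : Linf A) :
    A.neg ∈ X ↔ A ∉ X :=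
  ⟨mcs_not_mem_of_neg hX, mcs_neg_of_not_mem hX hA⟩

lemma mcs_bot_not_mem {X : Set Fm} (hX : IsMCS X) : Fm.bot ∉ X := by
  intro h
  exact hX.2.1 (deriv_of_mem Linf.bot h)

lemma mcs_imp_iff {X : Set Fm} (hX : IsMCS X) {A B : Fm} (hA : Linf A) (hB : Linf B) :
    A.imp B ∈ X ↔ (A ∈ X → B ∈ X) := by
  constructor
  · exact fun h hA' => mcs_mp_mem hX hB h hA'
  · intro h
    by_cases hA' : A ∈ X
    · refine mcs_mp hX (Linf.imp hA hB) ?_ (h hA')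
      refine prv_taut2 hB (Linf.imp hA hB) ?_
      intro v hv
      simp only [evalWith, hv]
      cases evalWith v A <;> rfl
    · refine mcs_mp hX (Linf.imp hA hB) ?_ (mcs_neg_of_not_mem hX hA hA')
      refine prv_taut2 (Linf.neg hA) (Linf.imp hA hB) ?_
      intro v hv
      simp only [evalWith] at *
      cases hAv : evalWith v A
      · rfl
      · rw [hAv] at hv; exact absurd hv (by simp)

lemma mcs_and_iff {X : Set Fm} (hX : IsMCS X) {A B : Fm} (hA : Linf A) (hB : Linf B) :
    A.and B ∈ X ↔ (A ∈ X ∧ B ∈ X) := by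
  constructor
  · intro h
    constructor
    · refine mcs_mp hX hA ?_ h
      refine prv_taut2 (Linf.and hA hB) hA ?_
      intro v hv
      simp only [evalWith] at hv
      exact ((Bool.and_eq_true _ _).mp hv).1
    · refine mcs_mp hX hB ?_ h
      refine prv_taut2 (Linf.and hA hB) hB ?_
      intro v hv
      simp only [evalWith] at hv
      exact ((Bool.and_eq_true _ _).mp hv).2
  · rintro ⟨h1, h2⟩
    have t : Prv K4hAx (A.imp (B.imp (A.and B))) := by
      refine prv_taut2 hA (Linf.imp hB (Linf.and hA hB)) ?_
      intro v hv
      simp only [evalWith, hv]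
      cases evalWith v B <;> rfl
    exact mcs_mp_mem hX (Linf.and hA hB)
      (mcs_mp hX (Linf.imp hB (Linf.and hA hB)) t h1) h2

lemma mcs_or_iff {X : Set Fm} (hX : IsMCS X) {A B : Fm} (hA : Linf A) (hB : Linf B) :
    A.or B ∈ X ↔ (A ∈ X ∨ B ∈ X) := by
  constructor
  · intro h
    by_contra hn
    push_neg at hn
    have hnA := mcs_neg_of_not_mem hX hA hn.1
    have hnB := mcs_neg_of_not_mem hX hB hn.2
    have t : Prv K4hAx ((A.or B).imp ((A.neg).imp ((B.neg).imp Fm.bot))) := by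
      refine prv_taut2 (Linf.or hA hB)
        (Linf.imp (Linf.neg hA) (Linf.imp (Linf.neg hB) Linf.bot)) ?_
      intro v hv
      simp only [evalWith] at *
      cases hAv : evalWith v A <;> cases hBv : evalWith v B <;> simp_all
    have h1 := mcs_mp hX (Linf.imp (Linf.neg hA) (Linf.imp (Linf.neg hB) Linf.bot)) t h
    have h2 := mcs_mp_mem hX (Linf.imp (Linf.neg hB) Linf.bot) h1 hnA
    have h3 := mcs_mp_mem hX Linf.bot h2 hnB
    exact mcs_bot_not_mem hX h3
  · intro h
    rcases h with h | h
    · refine mcs_mp hX (Linf.or hA hB) ?_ h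
      refine prv_taut2 hA (Linf.or hA hB) ?_
      intro v hv
      simp only [evalWith, hv]; rfl
    · refine mcs_mp hX (Linf.or hA hB) ?_ h
      refine prv_taut2 hB (Linf.or hA hB) ?_
      intro v hv
      simp only [evalWith, hv]
      cases evalWith v A <;> rfl

/-- Lindenbaum via Zorn. -/
lemma lindenbaum {X : Set Fm} (hL : ∀ A ∈ X, Linf A) (hc : ConsK X) :
    ∃ Y, X ⊆ Y ∧ IsMCS Y := by
  let S : Set (Set Fm) := {Y | X ⊆ Y ∧ (∀ A ∈ Y, Linf A) ∧ ConsK Y}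
  have hzorn := zorn_subset_nonempty S ?_ X ⟨subset_rfl, hL, hc⟩
  · obtain ⟨m, hXm, hm⟩ := hzorn
    refine ⟨m, hXm, hm.prop.2.1, hm.prop.2.2, ?_⟩
    intro A hA hnot hcons
    have hmem : insert A m ∈ S :=
      ⟨hXm.trans (Set.subset_insert _ _), by
        intro B hB
        rcases hB with h | h
        · subst h; exact hA
        · exact hm.prop.2.1 B h, hcons⟩
    have := hm.le_of_ge hmem (Set.subset_insert _ _)
    exact hnot (this (Set.mem_insert _ _))
  · intro c hcS hchain hcne
    refine ⟨⋃₀ c, ⟨?_, ?_, ?_⟩, fun s hs => Set.subset_sUnion_of_mem hs⟩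
    · obtain ⟨Y, hY⟩ := hcne
      exact (hcS hY).1.trans (Set.subset_sUnion_of_mem hY)
    · rintro A ⟨Y, hY, hA⟩
      exact (hcS hY).2.1 A hA
    · rintro ⟨l, hl, hp⟩
      have : ∃ Y ∈ c, ∀ B ∈ l, B ∈ Y := by
        clear hp
        induction l with
        | nil =>
          obtain ⟨Y, hY⟩ := hcne
          exact ⟨Y, hY, by simp⟩
        | cons a t ih =>
          obtain ⟨Y, hYc, hY⟩ := ih (fun B hB => hl B (by simp [hB]))
          obtain ⟨Z, hZc, haZ⟩ := hl a (by simp)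
          rcases hchain.total hYc hZc with h | h
          · exact ⟨Z, hZc, by
              intro B hB
              rcases List.mem_cons.mp hB with hBa | hBt
              · subst hBa; exact haZ
              · exact h (hY B hBt)⟩
          · exact ⟨Y, hYc, by
              intro B hB
              rcases List.mem_cons.mp hB with hBa | hBt
              · subst hBa; exact h haZ
              · exact hY B hBt⟩
      obtain ⟨Y, hYc, hY⟩ := this
      exact (hcS hYc).2.2 ⟨l, hY, hp⟩

end Aux3
section Aux4

attribute [local instance] Classical.propDecidable

/-- From boxes in `X` with index `≤ n` in membership form: `□n C ∈ X`. -/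
lemma mcs_box_mono {X : Set Fm} (hX : IsMCS X) {m n : ℕ} {C : Fm}
    (hmn : m ≤ n) (h : Fm.box m C ∈ X) : Fm.box n C ∈ X := by
  have hl := hX.1 _ h
  have hC := linf_of_linf_box hl
  have hlt := boxLt_of_linf_box hl
  exact mcs_mp hX (Linf.box n hC (boxLt_mono hlt hmn)) (prv_idx_mono hmn hC hlt) h

lemma mcs_box_four {X : Set Fm} (hX : IsMCS X) {m n : ℕ} {C : Fm}
    (hmn : m < n) (h : Fm.box m C ∈ X) : Fm.box n (Fm.box m C) ∈ X := by
  have hl := hX.1 _ h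
  have hC := linf_of_linf_box hl
  have hlt := boxLt_of_linf_box hl
  have h4 : Fm.box (m+1) (Fm.box m C) ∈ X :=
    mcs_mp hX (Linf.box (m+1) hl (fun i hi => by
      rcases hi with h | h
      · omega
      · exact lt_trans (hlt i h) (Nat.lt_succ_self m))) (prv_four hl) h
  have hlt' : BoxLt (Fm.box m C) (m+1) := fun i hi => by
    rcases hi with h | h
    · omega
    · exact lt_trans (hlt i h) (Nat.lt_succ_self m)
  exact mcs_mp hX (Linf.box n hl (boxLt_mono hlt' hmn))
    (prv_idx_mono hmn hl hlt') h4

/-- Existence lemma for the canonical construction. -/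
lemma exists_succ {X : Set Fm} (hX : IsMCS X) {n : ℕ} {B : Fm}
    (hB : Linf (Fm.box n B)) (hnot : Fm.box n B ∉ X) :
    ∃ Y, IsMCS Y ∧ B ∉ Y ∧
      ∀ m C, Fm.box m C ∈ X → (m < n+1 → C ∈ Y) ∧ (m+1 < n+1 → Fm.box m C ∈ Y) := by
  have hBL := linf_of_linf_box hB
  have hBlt := boxLt_of_linf_box hB
  set S : Set Fm :=
    {C | ∃ m ≤ n, Fm.box m C ∈ X} ∪
    {D | ∃ m C, m < n ∧ D = Fm.box m C ∧ Fm.box m C ∈ X} ∪ {B.neg}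
  have hSlinf : ∀ A ∈ S, Linf A := by
    rintro A ((⟨m, _, hm⟩ | ⟨m, C, _, rfl, hm⟩) | rfl)
    · exact linf_of_linf_box (hX.1 _ hm)
    · exact hX.1 _ hm
    · exact Linf.neg hBL
  -- elements of `S` other than `B.neg` have all box indices `< n`
  have hSlt : ∀ A, (A ∈ {C | ∃ m ≤ n, Fm.box m C ∈ X} ∪
      {D | ∃ m C, m < n ∧ D = Fm.box m C ∧ Fm.box m C ∈ X}) → BoxLt A n := by
    rintro A (⟨m, hmn, hm⟩ | ⟨m, C, hmn, rfl, hm⟩)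
    · exact boxLt_mono (boxLt_of_linf_box (hX.1 _ hm)) hmn
    · intro i hi
      rcases hi with h | h
      · omega
      · exact lt_trans (boxLt_of_linf_box (hX.1 _ hm) i h) hmn
  -- `□n A ∈ X` for any `A` in the non-negated part of `S`
  have hSbox : ∀ A, (A ∈ {C | ∃ m ≤ n, Fm.box m C ∈ X} ∪
      {D | ∃ m C, m < n ∧ D = Fm.box m C ∧ Fm.box m C ∈ X}) → Fm.box n A ∈ X := by
    rintro A (⟨m, hmn, hm⟩ | ⟨m, C, hmn, rfl, hm⟩)
    · exact mcs_box_mono hX hmn hm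
    · exact mcs_box_four hX hmn hm
  have hcons : ConsK S := by
    rintro ⟨l, hl, hp⟩
    -- filter out `B.neg`
    let l2 := l.filter (fun C => C ≠ B.neg)
    have hl2mem : ∀ C ∈ l2, C ∈ {C | ∃ m ≤ n, Fm.box m C ∈ X} ∪
        {D | ∃ m C, m < n ∧ D = Fm.box m C ∧ Fm.box m C ∈ X} := by
      intro C hC
      have hm := List.mem_filter.mp hC
      rcases hl C hm.1 with (h | h) | h
      · exact Or.inl h
      · exact Or.inr h
      · exact absurd h (by simpa using hm.2)
    have hl2linf : ∀ C ∈ l2, Linf C := by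
      intro C hC
      exact hSlinf C (by
        rcases hl2mem C hC with h | h
        · exact Or.inl (Or.inl h)
        · exact Or.inl (Or.inr h))
    have hllinf : ∀ C ∈ l, Linf C := fun C hC => hSlinf C (hl C hC)
    -- `⊢ conj l2 → B`
    have t : Prv K4hAx (((conjList l).imp Fm.bot).imp ((conjList l2).imp B)) := by
      refine prv_taut2 (Linf.imp (linf_conjList hllinf) Linf.bot)
        (Linf.imp (linf_conjList hl2linf) hBL) ?_
      intro v hv
      simp only [evalWith, eval_conjList] at *
      cases h2 : l2.all (fun C => evalWith v C) with
      | false => simp [h2]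
      | true =>
        cases hBv : evalWith v B with
        | true => simp [hBv]
        | false =>
          have hnegB : evalWith v B.neg = true := by simp [evalWith, hBv]
          have := all_filter_imp (l := l) (C := B.neg) h2 hnegB
          rw [this] at hv
          exact absurd hv (by simp)
    have hp2 : Prv K4hAx ((conjList l2).imp B) := t.mp hp
    -- necessitate at `n`
    have hl2lt : BoxLt (conjList l2) n :=
      boxLt_conjList (fun C hC => hSlt C (hl2mem C hC))
    have hnec : Prv K4hAx (Fm.box n ((conjList l2).imp B)) :=
      Prv.nec n hp2 (boxLt_imp hl2lt hBlt)
    have hK := prv_K (A := conjList l2) (B := B) (n := n)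
      (Linf.box n (Linf.imp (linf_conjList hl2linf) hBL) (boxLt_imp hl2lt hBlt))
    have hdist : Prv K4hAx ((Fm.box n (conjList l2)).imp (Fm.box n B)) := hK.mp hnec
    -- `□n (conj l') ∈ X` for any list from the non-negated part
    have hboxAll : ∀ l' : List Fm, (∀ C ∈ l', C ∈ {C | ∃ m ≤ n, Fm.box m C ∈ X} ∪
        {D | ∃ m C, m < n ∧ D = Fm.box m C ∧ Fm.box m C ∈ X}) →
        Fm.box n (conjList l') ∈ X := by
      intro l'
      induction l' with
      | nil =>
        intro _
        refine mcs_of_prv hX (Linf.box n linf_top (boxLt_top n)) ?_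
        refine Prv.nec n ?_ (boxLt_top n)
        exact Prv.taut linf_top (fun v => by simp [conjList, Fm.top, evalWith])
      | cons a t ih =>
        intro hmem
        have hamem := hmem a List.mem_cons_self
        have ha := hSbox a hamem
        have hat : Fm.box n (conjList t) ∈ X :=
          ih (fun C hC => hmem C (List.mem_cons_of_mem a hC))
        have haLinf : Linf a := by
          rcases hamem with h | h
          · exact hSlinf a (Or.inl (Or.inl h))
          · exact hSlinf a (Or.inl (Or.inr h))
        have halt : BoxLt a n := hSlt a hamem
        have htlinf : Linf (conjList t) := linf_conjList (fun C hC => by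
          rcases hmem C (List.mem_cons_of_mem a hC) with h | h
          · exact hSlinf C (Or.inl (Or.inl h))
          · exact hSlinf C (Or.inl (Or.inr h)))
        have htlt : BoxLt (conjList t) n :=
          boxLt_conjList (fun C hC => hSlt C (hmem C (List.mem_cons_of_mem a hC)))
        have hcomb := prv_box_and (n := n) haLinf htlinf halt htlt
        have h1 := mcs_mp hX
          (Linf.imp (Linf.box n htlinf htlt)
            (Linf.box n (Linf.and haLinf htlinf) (boxLt_and halt htlt))) hcomb ha
        exact mcs_mp_mem hX (Linf.box n (Linf.and haLinf htlinf) (boxLt_and halt htlt)) h1 hat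
    have hboxconj : Fm.box n (conjList l2) ∈ X := hboxAll l2 hl2mem
    exact hnot (mcs_mp hX (Linf.box n hBL hBlt) hdist hboxconj)
  obtain ⟨Y, hSY, hY⟩ := lindenbaum hSlinf hcons
  refine ⟨Y, hY, ?_, ?_⟩
  · exact mcs_not_mem_of_neg hY (hSY (Or.inr rfl))
  · intro m C hm
    constructor
    · intro hmn
      exact hSY (Or.inl (Or.inl ⟨m, Nat.lt_succ_iff.mp hmn, hm⟩))
    · intro hmn
      exact hSY (Or.inl (Or.inr ⟨m, C, by omega, rfl, hm⟩))

end Aux4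
section Aux5

attribute [local instance] Classical.propDecidable

/-- Worlds of the canonical model: an MCS together with a level. -/
def CWorld : Type := {X : Set Fm // IsMCS X} × ℕ

/-- Accessibility: levels strictly decrease, and boxed formulas of the source
    transfer according to the target's level. -/
def CRel (w u : CWorld) : Prop :=
  u.2 < w.2 ∧ ∀ m C, Fm.box m C ∈ w.1.1 →
    (m < u.2 → C ∈ u.1.1) ∧ (m + 1 < u.2 → Fm.box m C ∈ u.1.1)

lemma crel_trans {w u x : CWorld} (h1 : CRel w u) (h2 : CRel u x) : CRel w x := by
  have hxu := h2.1
  have huw := h1.1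
  refine ⟨lt_trans h2.1 h1.1, ?_⟩
  intro m C hm
  have hY : m + 1 < u.2 → Fm.box m C ∈ u.1.1 := ((h1.2 m C hm).2)
  constructor
  · intro hmx
    have hmu : m + 1 < u.2 := by omega
    exact (h2.2 m C (hY hmu)).1 (by omega)
  · intro hmx
    have hmu : m + 1 < u.2 := by omega
    exact (h2.2 m C (hY hmu)).2 hmx

/-- Forcing in the canonical model. -/
def cforce : MFm → CWorld → Prop
  | .atom k, w => Fm.atom k ∈ w.1.1
  | .q i, w => i < w.2
  | .bot, _ => False
  | .and A B, w => cforce A w ∧ cforce B w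
  | .or A B, w => cforce A w ∨ cforce B w
  | .imp A B, w => cforce A w → cforce B w
  | .neg A, w => ¬ cforce A w
  | .box A, w => ∀ u, CRel w u → cforce A u

lemma meval_cforce (w : CWorld) :
    ∀ A : MFm, mevalWith (fun G => decide (cforce G w)) A = true ↔ cforce A w := by
  intro A
  induction A with
  | atom k => simp [mevalWith, cforce]; exact @decide_eq_true_iff _ (Classical.propDecidable _)
  | q i => simp [mevalWith, cforce]; exact @decide_eq_true_iff _ (Classical.propDecidable _)
  | bot => simp [mevalWith, cforce]
  | and A B ihA ihB => simp [mevalWith, cforce, ihA, ihB]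
  | or A B ihA ihB => simp [mevalWith, cforce, ihA, ihB]
  | imp A B ihA ihB =>
    simp only [mevalWith, cforce, Bool.or_eq_true, Bool.not_eq_true']
    rw [← ihA, ← ihB]
    constructor
    · rintro (h | h) h'
      · rw [h] at h'; exact absurd h' (by simp)
      · exact h
    · intro h
      cases hA : mevalWith (fun G => decide (cforce G w)) A with
      | false => exact Or.inl rfl
      | true => exact Or.inr (h hA)
  | neg A ihA =>
    simp only [mevalWith, cforce, Bool.not_eq_true']
    rw [← ihA]
    cases hA : mevalWith (fun G => decide (cforce G w)) A <;> simp [hA]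
  | box A ihA => simp [mevalWith, cforce]; exact @decide_eq_true_iff _ (Classical.propDecidable _)

/-- Soundness of `K4Q` over the canonical model. -/
lemma k4q_sound {G : MFm} (h : K4Q G) : ∀ w : CWorld, cforce G w := by
  induction h with
  | taut ht =>
    intro w
    exact (meval_cforce w _).mp (ht _)
  | axK A B =>
    intro w
    intro h1 h2 u hu
    exact h1 u hu (h2 u hu)
  | axFour A =>
    intro w
    intro h1 u hu x hx
    exact h1 x (crel_trans hu hx)
  | mp h1 h2 ih1 ih2 =>
    intro w
    exact ih1 w (ih2 w)
  | nec h ih =>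
    intro w u _
    exact ih u

lemma cforce_qconj (n : ℕ) (w : CWorld) : cforce (qconj n) w ↔ n < w.2 := by
  induction n with
  | zero => simp [qconj, cforce]
  | succ n ih =>
    simp only [qconj, cforce, ih]
    omega

/-- The truth lemma. -/
lemma truth_lemma : ∀ {A : Fm}, Linf A → ∀ w : CWorld,
    (∀ i, occursBox i A → i + 1 < w.2) → (cforce (trT A) w ↔ A ∈ w.1.1) := by
  intro A hA
  induction hA with
  | atom k => intro w _; simp [trT, cforce]
  | bot =>
    intro w _
    simp only [trT, cforce]
    exact ⟨False.elim, fun h => mcs_bot_not_mem w.1.2 h⟩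
  | and hA hB ihA ihB =>
    intro w hocc
    have hA' := ihA w (fun i hi => hocc i (Or.inl hi))
    have hB' := ihB w (fun i hi => hocc i (Or.inr hi))
    simp only [trT, cforce, hA', hB']
    exact (mcs_and_iff w.1.2 ‹Linf _› ‹Linf _›).symm
  | or hA hB ihA ihB =>
    intro w hocc
    have hA' := ihA w (fun i hi => hocc i (Or.inl hi))
    have hB' := ihB w (fun i hi => hocc i (Or.inr hi))
    simp only [trT, cforce, hA', hB']
    exact (mcs_or_iff w.1.2 ‹Linf _› ‹Linf _›).symm
  | imp hA hB ihA ihB =>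
    intro w hocc
    have hA' := ihA w (fun i hi => hocc i (Or.inl hi))
    have hB' := ihB w (fun i hi => hocc i (Or.inr hi))
    simp only [trT, cforce, hA', hB']
    exact (mcs_imp_iff w.1.2 ‹Linf _› ‹Linf _›).symm
  | neg hA ihA =>
    intro w hocc
    have hA' := ihA w (fun i hi => hocc i hi)
    simp only [trT, cforce, hA']
    exact (mcs_neg_iff w.1.2 ‹Linf _›).symm
  | box n hA hlt ihA =>
    rename_i A'
    intro w hocc
    have hn1 : n + 1 < w.2 := hocc n (Or.inl rfl)
    constructor
    · -- force → membership, by contraposition via the existence lemma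
      intro hf
      by_contra hnot
      obtain ⟨Y, hY, hBnot, hclause⟩ :=
        exists_succ w.1.2 (Linf.box n hA hlt) hnot
      set u : CWorld := (⟨Y, hY⟩, n + 1) with hu
      have hrel : CRel w u := by
        refine ⟨hn1, ?_⟩
        intro m C hm
        exact hclause m C hm
      have hq : cforce (qconj n) u := (cforce_qconj n u).mpr (Nat.lt_succ_self n)
      have := hf u hrel
      simp only [trT, cforce] at this
      have hforceA := this hq
      have hiff := ihA u (fun i hi => by
        have := hlt i hi
        simp only [hu]
        omega)
      exact hBnot (hiff.mp hforceA)
    · intro hmem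
      simp only [trT, cforce]
      intro u hrel hq
      have hnu : n < u.2 := (cforce_qconj n u).mp hq
      have hAu : A' ∈ u.1.1 := (hrel.2 n A' hmem).1 hnu
      have hiff := ihA u (fun i hi => by
        have := hlt i hi
        omega)
      exact hiff.mpr hAu

end Aux5
section Aux6

attribute [local instance] Classical.propDecidable

def maxIdx : Fm → ℕ
  | .atom _ => 0
  | .bot => 0
  | .and A B => max (maxIdx A) (maxIdx B)
  | .or A B => max (maxIdx A) (maxIdx B)
  | .imp A B => max (maxIdx A) (maxIdx B)
  | .neg A => maxIdx A
  | .box n A => max (n + 1) (maxIdx A)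

lemma lt_maxIdx {i : ℕ} : ∀ {A : Fm}, occursBox i A → i < maxIdx A := by
  intro A
  induction A with
  | atom k => intro h; exact h.elim
  | bot => intro h; exact h.elim
  | and A B ihA ihB =>
    rintro (h | h)
    · exact lt_of_lt_of_le (ihA h) (le_max_left _ _)
    · exact lt_of_lt_of_le (ihB h) (le_max_right _ _)
  | or A B ihA ihB =>
    rintro (h | h)
    · exact lt_of_lt_of_le (ihA h) (le_max_left _ _)
    · exact lt_of_lt_of_le (ihB h) (le_max_right _ _)
  | imp A B ihA ihB =>
    rintro (h | h)
    · exact lt_of_lt_of_le (ihA h) (le_max_left _ _)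
    · exact lt_of_lt_of_le (ihB h) (le_max_right _ _)
  | neg A ihA => intro h; exact ihA h
  | box n A ihA =>
    rintro (rfl | h)
    · exact lt_of_lt_of_le (Nat.lt_succ_self i) (le_max_left _ _)
    · exact lt_of_lt_of_le (ihA h) (le_max_right _ _)

/-- Main lemma: the translation is faithful on theorems. -/
lemma trT_faithful {F : Fm} (hF : Linf F) (h : K4Q (trT F)) : Prv K4hAx F := by
  by_contra hnot
  -- `{F.neg}` is consistent
  have hcons : ConsK {F.neg} := by
    rintro ⟨l, hl, hp⟩
    refine hnot ?_
    have hllinf : ∀ C ∈ l, Linf C := by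
      intro C hC
      have := hl C hC
      rw [Set.mem_singleton_iff] at this
      subst this
      exact Linf.neg hF
    have t : Prv K4hAx (((conjList l).imp Fm.bot).imp F) := by
      refine prv_taut2 (Linf.imp (linf_conjList hllinf) Linf.bot) hF ?_
      intro v hv
      simp only [evalWith, eval_conjList] at *
      cases hFv : evalWith v F with
      | true => rfl
      | false =>
        have hall : l.all (fun C => evalWith v C) = true := by
          rw [List.all_eq_true]
          intro C hC
          have := hl C hC
          rw [Set.mem_singleton_iff] at this
          subst this
          simp [evalWith, hFv]
        rw [hall] at hv
        exact absurd hv (by simp)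
    exact t.mp hp
  obtain ⟨X0, hsub, hX0⟩ := lindenbaum (by
    rintro A hA
    rw [Set.mem_singleton_iff] at hA
    subst hA
    exact Linf.neg hF) hcons
  set w0 : CWorld := (⟨X0, hX0⟩, maxIdx F + 1) with hw0
  have hocc : ∀ i, occursBox i F → i + 1 < w0.2 := by
    intro i hi
    have := lt_maxIdx hi
    simp only [hw0]
    omega
  have htruth := truth_lemma hF w0 hocc
  have hFnot : F ∉ X0 := mcs_not_mem_of_neg hX0 (hsub rfl)
  have hforce := k4q_sound h w0
  exact hFnot (htruth.mp hforce)

lemma conjM_map_trT (l : List Fm) : conjM (l.map trT) = trT (conjList l) := by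
  induction l with
  | nil => rfl
  | cons a t ih =>
    show (trT a).and (conjM (List.map trT t)) = (trT a).and (trT (conjList t))
    rw [ih]

end Aux6
/-- completeness of the translation `t` for `K4`:
    if `Γ^t ⊢_{K4(Q)} A^t` then `Γ ⊢_{K4_h} A`. -/
theorem trT_complete_K4 (Γ : Set Fm) (A : Fm)
    (hΓ : ∀ B ∈ Γ, Linf B) (hA : Linf A)
    (h : DerivM K4Q (trT '' Γ) (trT A)) :
    Deriv K4hAx Γ A := by
  obtain ⟨lM, hlM, hp⟩ := h
  -- choose preimages in `Γ`
  have : ∃ l : List Fm, (∀ B ∈ l, B ∈ Γ) ∧ l.map trT = lM := by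
    clear hp
    induction lM with
    | nil => exact ⟨[], by simp, rfl⟩
    | cons a t ih =>
      obtain ⟨l, hl, hmap⟩ := ih (fun B hB => hlM B (List.mem_cons_of_mem a hB))
      obtain ⟨C, hCΓ, hCa⟩ := hlM a List.mem_cons_self
      exact ⟨C :: l, by
        intro B hB
        rcases List.mem_cons.mp hB with h | h
        · subst h; exact hCΓ
        · exact hl B h, by simp [hmap, hCa]⟩
  obtain ⟨l, hlΓ, hmap⟩ := this
  have hK4Q : K4Q (trT ((conjList l).imp A)) := by
    show K4Q ((trT (conjList l)).imp (trT A))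
    rw [← conjM_map_trT, hmap]
    exact hp
  have hllinf : ∀ B ∈ l, Linf B := fun B hB => hΓ B (hlΓ B hB)
  have hLinf : Linf ((conjList l).imp A) := Linf.imp (linf_conjList hllinf) hA
  exact ⟨l, hlΓ, trT_faithful hLinf hK4Q⟩
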